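/- Let (f,M) be a polymatroid. Then for every A ⊆ M the difference f − f↓A is a modular polymatroid on M. In particular f = f↓M + (f − f↓M) expresses f as the sum of a tight polymatroid and a modular polymatroid, and this decomposition is unique: if f = g + m where g is a polymatroid on M tight at every element of M and m is a modular polymatroid on M, then g = f↓M and m = f − f↓M. -/

import Mathlib

open Finset

noncomputable section

variable {α : Type*} [DecidableEq α]

/-- `f` is a polymatroid with ground set `M`: it vanishes on `∅` and is
non-negative, monotone and submodular on subsets of `M`. -/
def IsPolymatroid (M : Finset α) (f : Finset α → ℝ) : Prop :=
  f ∅ = 0 ∧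
  (∀ A, A ⊆ M → 0 ≤ f A) ∧
  (∀ A B, A ⊆ B → B ⊆ M → f A ≤ f B) ∧
  (∀ A B, A ⊆ M → B ⊆ M → f (A ∪ B) + f (A ∩ B) ≤ f A + f B)

/-- `pmi f I J K` is the expression `f(I,J|K) = f(I∪K)+f(J∪K)−f(I∪J∪K)−f(K)`. -/
def pmi (f : Finset α → ℝ) (I J K : Finset α) : ℝ :=
  f (I ∪ K) + f (J ∪ K) - f (I ∪ J ∪ K) - f K

/-- `pcd f I K` is the expression `f(I|K) = f(I∪K) − f(K)`. -/
def pcd (f : Finset α → ℝ) (I K : Finset α) : ℝ := f (I ∪ K) - f K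

/-- `runit A` is the rank function `r_A`: `r_A(I) = 1` if `A ∩ I ≠ ∅`, else `0`. -/
def runit (A I : Finset α) : ℝ := if (A ∩ I).Nonempty then 1 else 0

/-- Tightening of `f` at `a` (relative to ground set `M`):
`f↓a = f − f(a|M∖{a})·r_{{a}}`. -/
def tightenAt (M : Finset α) (f : Finset α → ℝ) (a : α) : Finset α → ℝ :=
  fun I => f I - pcd f {a} (M \ {a}) * runit {a} I

/-- A polymatroid is modular if `f(A) = Σ_{i∈A} f({i})` for all `A ⊆ M`. -/
def IsModularPM (M : Finset α) (f : Finset α → ℝ) : Prop :=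
  IsPolymatroid M f ∧ ∀ A ⊆ M, f A = ∑ i ∈ A, f {i}


section Aux
variable {M : Finset α} {f : Finset α → ℝ}

lemma runit_singleton (a : α) (I : Finset α) :
    runit {a} I = if a ∈ I then (1:ℝ) else 0 := by
  have : ({a} ∩ I).Nonempty ↔ a ∈ I := by simp [Finset.Nonempty]
  simp only [runit, this]

lemma singleton_union_sdiff {a : α} (ha : a ∈ M) : {a} ∪ (M \ {a}) = M := by
  ext x; by_cases h : x = a <;> simp [h, ha]

lemma pcd_singleton {a : α} (ha : a ∈ M) :
    pcd f {a} (M \ {a}) = f M - f (M \ {a}) := by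
  rw [pcd, singleton_union_sdiff ha]

lemma c_nonneg (hf : IsPolymatroid M f) {a : α} (ha : a ∈ M) :
    0 ≤ pcd f {a} (M \ {a}) := by
  rw [pcd_singleton ha]
  have := hf.2.2.1 (M \ {a}) M (sdiff_subset) (le_refl M)
  linarith

lemma key_ineq (hf : IsPolymatroid M f) {a : α} {A : Finset α}
    (ha : a ∈ M) (haA : a ∈ A) (hA : A ⊆ M) :
    pcd f {a} (M \ {a}) ≤ f A - f (A \ {a}) := by
  have hsub := hf.2.2.2 (M \ {a}) A (sdiff_subset) hA
  have h1 : (M \ {a}) ∪ A = M := by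
    ext x; by_cases h : x = a
    · simp [h, ha, haA]
    · simp only [Finset.mem_union, Finset.mem_sdiff, Finset.mem_singleton, h]
      exact ⟨fun hx => by tauto, fun hx => by simp [hx]⟩
  have h2 : (M \ {a}) ∩ A = A \ {a} := by
    ext x; simp [and_comm, and_left_comm]
    tauto
  rw [h1, h2] at hsub
  rw [pcd_singleton ha]
  linarith

lemma tighten_poly (hf : IsPolymatroid M f) {a : α} (ha : a ∈ M) :
    IsPolymatroid M (tightenAt M f a) := by
  set c := pcd f {a} (M \ {a}) with hc
  have hc0 : 0 ≤ c := c_nonneg hf ha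
  have hval : ∀ I, tightenAt M f a I = f I - (if a ∈ I then c else 0) := by
    intro I
    simp only [tightenAt, runit_singleton, mul_ite, mul_one, mul_zero, hc]
  refine ⟨?_, ?_, ?_, ?_⟩
  · rw [hval]; simp [hf.1]
  · intro A hA
    rw [hval]
    by_cases haA : a ∈ A
    · have := key_ineq hf ha haA hA
      have h0 : 0 ≤ f (A \ {a}) := hf.2.1 _ ((sdiff_subset).trans hA)
      simp only [haA, if_pos]
      linarith
    · simp only [haA, if_neg, not_false_iff]
      have := hf.2.1 A hA
      linarith
  · intro A B hAB hB
    rw [hval, hval]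
    have hmono := hf.2.2.1 A B hAB hB
    by_cases haA : a ∈ A
    · simp [haA, hAB haA]; linarith
    · by_cases haB : a ∈ B
      · simp only [haA, if_neg, not_false_iff, haB, if_pos, sub_zero]
        have hkey := key_ineq hf ha haB hB
        have hAB' : A ⊆ B \ {a} := by
          intro x hx; simp [hAB hx]; rintro rfl; exact haA hx
        have := hf.2.2.1 A (B \ {a}) hAB' ((sdiff_subset).trans hB)
        linarith
      · simp [haA, haB]; linarith
  · intro A B hA hB
    rw [hval, hval, hval, hval]
    have hsub := hf.2.2.2 A B hA hB
    by_cases haA : a ∈ A <;> by_cases haB : a ∈ B <;>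
      simp [haA, haB, Finset.mem_union, Finset.mem_inter] <;> linarith

lemma tighten_pcd_other {a b : α} (ha : a ∈ M) (hab : a ≠ b) :
    pcd (tightenAt M f a) {b} (M \ {b}) = pcd f {b} (M \ {b}) := by
  have h1 : a ∈ {b} ∪ (M \ {b}) := by simp [ha, hab]
  have h2 : a ∈ M \ {b} := by simp [ha, hab]
  simp only [pcd, tightenAt, runit_singleton, if_pos h1, if_pos h2]
  ring

lemma tighten_pcd_self (a : α) :
    pcd (tightenAt M f a) {a} (M \ {a}) = 0 := by
  have h1 : a ∈ {a} ∪ (M \ {a}) := by simp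
  have h2 : a ∉ M \ {a} := by simp
  simp only [pcd, tightenAt, runit_singleton, if_pos h1, if_neg h2]
  ring

lemma foldl_eq (M : Finset α) :
    ∀ (l : List α), l.Nodup → (∀ a ∈ l, a ∈ M) → ∀ (f : Finset α → ℝ) (I : Finset α),
      l.foldl (tightenAt M) f I =
        f I - ∑ a ∈ l.toFinset, pcd f {a} (M \ {a}) * runit {a} I
  | [], _, _, f, I => by simp
  | a :: l, hnd, hmem, f, I => by
    simp only [List.foldl_cons, List.toFinset_cons]
    rw [foldl_eq M l (List.Nodup.of_cons hnd)
        (fun b hb => hmem b (List.mem_cons_of_mem a hb))]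
    have hal : a ∉ l.toFinset := by
      simp only [List.mem_toFinset]; exact (List.nodup_cons.mp hnd).1
    rw [Finset.sum_insert hal]
    have hsum : ∑ b ∈ l.toFinset, pcd (tightenAt M f a) {b} (M \ {b}) * runit {b} I
        = ∑ b ∈ l.toFinset, pcd f {b} (M \ {b}) * runit {b} I := by
      refine Finset.sum_congr rfl fun b hb => ?_
      rw [tighten_pcd_other (hmem a (List.mem_cons_self))
          (fun h => hal (h ▸ hb))]
    rw [hsum]
    simp only [tightenAt]
    ring

lemma foldl_poly (M : Finset α) :
    ∀ (l : List α), (∀ a ∈ l, a ∈ M) → ∀ (f : Finset α → ℝ), IsPolymatroid M f →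
      IsPolymatroid M (l.foldl (tightenAt M) f)
  | [], _, f, hf => hf
  | a :: l, hmem, f, hf => by
    simp only [List.foldl_cons]
    exact foldl_poly M l (fun b hb => hmem b (List.mem_cons_of_mem a hb))
      _ (tighten_poly hf (hmem a (List.mem_cons_self)))

lemma modular_sum (hf : IsPolymatroid M f) {S : Finset α} (hS : S ⊆ M) :
    IsModularPM M (fun I => ∑ a ∈ S, pcd f {a} (M \ {a}) * runit {a} I) := by
  set c : α → ℝ := fun a => pcd f {a} (M \ {a}) with hc
  have hc0 : ∀ a ∈ S, 0 ≤ c a := fun a ha => c_nonneg hf (hS ha)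
  constructor
  · refine ⟨?_, ?_, ?_, ?_⟩
    · simp [runit_singleton]
    · intro A _
      refine Finset.sum_nonneg fun a ha => mul_nonneg (hc0 a ha) ?_
      rw [runit_singleton]; split <;> norm_num
    · intro A B hAB _
      refine Finset.sum_le_sum fun a ha => mul_le_mul_of_nonneg_left ?_ (hc0 a ha)
      rw [runit_singleton, runit_singleton]
      by_cases h : a ∈ A
      · simp [h, hAB h]
      · simp only [h, if_neg, not_false_iff]; split <;> norm_num
    · intro A B _ _
      rw [← Finset.sum_add_distrib, ← Finset.sum_add_distrib]
      refine le_of_eq (Finset.sum_congr rfl fun a _ => ?_)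
      simp only [runit_singleton, Finset.mem_union, Finset.mem_inter]
      by_cases hA : a ∈ A <;> by_cases hB : a ∈ B <;> simp [hA, hB]
  · intro A hA
    have hsing : ∀ i, (∑ a ∈ S, c a * runit {a} ({i} : Finset α))
        = if i ∈ S then c i else 0 := by
      intro i
      have : ∀ a ∈ S, c a * runit {a} ({i} : Finset α)
          = if a = i then c a else 0 := by
        intro a _
        rw [runit_singleton]
        simp only [Finset.mem_singleton]
        split <;> simp_all
      rw [Finset.sum_congr rfl this, Finset.sum_ite_eq' S i c]
    simp only [hc] at hsing
    simp only [hsing]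
    have hl : ∀ a ∈ S, c a * runit {a} A = if a ∈ A then c a else 0 := by
      intro a _
      rw [runit_singleton]; split <;> simp
    rw [Finset.sum_congr rfl hl, Finset.sum_ite_mem, Finset.sum_ite_mem,
      Finset.inter_comm]

end Aux

/-- `f − f↓A` is a modular polymatroid for every `A ⊆ M` (given as a
duplicate-free list); `f↓M` is a polymatroid tight at every element of `M`, so
`f = f↓M + (f − f↓M)` decomposes `f` into a tight plus a modular part, and this
decomposition is unique. -/
theorem statement_3 (M : Finset α) (f : Finset α → ℝ) (hf : IsPolymatroid M f) :
    (∀ l : List α, l.Nodup → (∀ a ∈ l, a ∈ M) →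
      IsModularPM M (fun I => f I - l.foldl (tightenAt M) f I)) ∧
    (∀ l : List α, l.Nodup → l.toFinset = M →
      (IsPolymatroid M (l.foldl (tightenAt M) f) ∧
       (∀ a ∈ M, pcd (l.foldl (tightenAt M) f) {a} (M \ {a}) = 0) ∧
       (∀ g m : Finset α → ℝ, IsPolymatroid M g →
          (∀ a ∈ M, pcd g {a} (M \ {a}) = 0) → IsModularPM M m →
          (∀ A ⊆ M, f A = g A + m A) →
          ∀ A ⊆ M, g A = l.foldl (tightenAt M) f A ∧
                   m A = f A - l.foldl (tightenAt M) f A))) := by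
  constructor
  · intro l hnd hmem
    have heq : (fun I => f I - l.foldl (tightenAt M) f I)
        = fun I => ∑ a ∈ l.toFinset, pcd f {a} (M \ {a}) * runit {a} I := by
      funext I
      rw [foldl_eq M l hnd hmem f I]; ring
    rw [heq]
    exact modular_sum hf (fun a ha => hmem a (List.mem_toFinset.mp ha))
  · intro l hnd hlM
    have hmem : ∀ a ∈ l, a ∈ M := fun a ha => hlM ▸ List.mem_toFinset.mpr ha
    have hfold := foldl_eq M l hnd hmem f
    refine ⟨foldl_poly M l hmem f hf, ?_, ?_⟩
    · intro a ha
      rw [pcd, singleton_union_sdiff ha, hfold, hfold, hlM]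
      have hsum : ∑ b ∈ M, pcd f {b} (M \ {b}) * runit {b} M
          - ∑ b ∈ M, pcd f {b} (M \ {b}) * runit {b} (M \ {a})
          = pcd f {a} (M \ {a}) := by
        rw [← Finset.sum_sub_distrib]
        have : ∀ b ∈ M, pcd f {b} (M \ {b}) * runit {b} M
            - pcd f {b} (M \ {b}) * runit {b} (M \ {a})
            = if b = a then pcd f {b} (M \ {b}) else 0 := by
          intro b hb
          rw [runit_singleton, runit_singleton, if_pos hb]
          by_cases h : b = a
          · simp [h]
          · simp [h, hb]
        rw [Finset.sum_congr rfl this, Finset.sum_ite_eq' M a, if_pos ha]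
      rw [pcd_singleton ha] at hsum
      linarith
    · intro g m hg hgt hm hdecomp A hA
      have hcm : ∀ a ∈ M, pcd f {a} (M \ {a}) = m {a} := by
        intro a ha
        have h1 := hdecomp M (le_refl M)
        have h2 := hdecomp (M \ {a}) sdiff_subset
        have h3 := hgt a ha
        have h4 := hm.2 M (le_refl M)
        have h5 := hm.2 (M \ {a}) sdiff_subset
        rw [pcd_singleton ha] at h3 ⊢
        have h6 : ∑ i ∈ M, m {i} - ∑ i ∈ M \ {a}, m {i} = m {a} := by
          rw [← Finset.sum_sdiff (Finset.sdiff_subset (s := M) (t := {a}))]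
          have : M \ (M \ {a}) = {a} := by
            ext x; by_cases h : x = a <;> simp [h, ha]
          rw [this, Finset.sum_singleton]
          ring
        linarith
      have hsumA : ∑ b ∈ l.toFinset, pcd f {b} (M \ {b}) * runit {b} A = m A := by
        rw [hlM]
        have : ∀ b ∈ M, pcd f {b} (M \ {b}) * runit {b} A
            = if b ∈ A then m {b} else 0 := by
          intro b hb
          rw [hcm b hb, runit_singleton]
          split <;> simp
        rw [Finset.sum_congr rfl this, Finset.sum_ite_mem,
          Finset.inter_eq_right.mpr hA]
        exact (hm.2 A hA).symm
      have hgA : g A = l.foldl (tightenAt M) f A := by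
        rw [hfold, hsumA]
        have := hdecomp A hA
        linarith
      exact ⟨hgA, by rw [hfold, hsumA]; have := hdecomp A hA; linarith⟩
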